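/- Let f : A → Q and g : B → Q be continuous open surjections between topological spaces. Let P = {(a, b) ∈ A × B | f a = g b} with the subspace topology, and let p : P → A and p' : P → B be the two projections. Then the commutative square with sides p, p', f, g (which is a pullback square in TopCat) is also a pushout square in TopCat. -/

import Mathlib

open CategoryTheory Limits in
/-- A "perfect square" in Top — the pullback square generated by two
continuous open surjections `f : A → Q`, `g : B → Q` — is also a pushout square in
`TopCat`. -/
theorem perfect_square_is_pushout
    {A B Q : Type} [TopologicalSpace A] [TopologicalSpace B] [TopologicalSpace Q]
    (f : A → Q) (g : B → Q)
    (hfc : Continuous f) (hfs : Function.Surjective f) (hfo : IsOpenMap f)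
    (hgc : Continuous g) (hgs : Function.Surjective g) (hgo : IsOpenMap g) :
    Nonempty (IsColimit (PushoutCocone.mk
      (f := (TopCat.ofHom (ContinuousMap.mk (fun p : {p : A × B // f p.1 = g p.2} => p.1.1)
        (by fun_prop)) : TopCat.of {p : A × B // f p.1 = g p.2} ⟶ TopCat.of A))
      (g := (TopCat.ofHom (ContinuousMap.mk (fun p : {p : A × B // f p.1 = g p.2} => p.1.2)
        (by fun_prop)) : TopCat.of {p : A × B // f p.1 = g p.2} ⟶ TopCat.of B))
      (show TopCat.of A ⟶ TopCat.of Q from TopCat.ofHom (ContinuousMap.mk f hfc))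
      (show TopCat.of B ⟶ TopCat.of Q from TopCat.ofHom (ContinuousMap.mk g hgc))
      (by ext ⟨p, hp⟩; exact hp))) := by
  constructor
  -- For each cocone `s`, we have `cond : ∀ {a b}, f a = g b → s.inl a = s.inr b`.
  have cond : ∀ (s : PushoutCocone (C := TopCat)
      (TopCat.ofHom (ContinuousMap.mk (fun p : {p : A × B // f p.1 = g p.2} => p.1.1)
        (by fun_prop)) : TopCat.of {p : A × B // f p.1 = g p.2} ⟶ TopCat.of A)
      (TopCat.ofHom (ContinuousMap.mk (fun p : {p : A × B // f p.1 = g p.2} => p.1.2)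
        (by fun_prop)) : TopCat.of {p : A × B // f p.1 = g p.2} ⟶ TopCat.of B))
      (a : A) (b : B), f a = g b → s.inl a = s.inr b := by
    intro s a b h
    have := ConcreteCategory.congr_hom s.condition (⟨(a, b), h⟩ : {p : A × B // f p.1 = g p.2})
    exact this
  apply PushoutCocone.IsColimit.mk
  case desc =>
    intro s
    have key : ∀ a a', f a = f a' → s.inl a = s.inl a' := by
      intro a a' h
      obtain ⟨b, hb⟩ := hgs (f a)
      rw [cond s a b hb.symm, cond s a' b (h ▸ hb.symm)]
    refine TopCat.ofHom (ContinuousMap.mk (fun q => s.inl (hfs q).choose) ?_)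
    rw [continuous_def]
    intro U hU
    convert hfo _ (hU.preimage s.inl.hom.continuous) using 1
    ext q
    constructor
    · intro hq
      exact ⟨(hfs q).choose, hq, (hfs q).choose_spec⟩
    · rintro ⟨a, ha, rfl⟩
      have := key (hfs (f a)).choose a (hfs (f a)).choose_spec
      show s.inl (hfs (f a)).choose ∈ U
      rw [this]; exact ha
  case fac_left =>
    intro s
    apply TopCat.ext
    intro a
    obtain ⟨b, hb⟩ := hgs (f a)
    show s.inl (hfs (f a)).choose = s.inl a
    rw [cond s _ b ((hfs (f a)).choose_spec.trans hb.symm), cond s a b hb.symm]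
  case fac_right =>
    intro s
    apply TopCat.ext
    intro b
    show s.inl (hfs (g b)).choose = s.inr b
    exact cond s _ b (hfs (g b)).choose_spec
  case uniq =>
    intro s m h₁ h₂
    apply TopCat.ext
    intro q
    obtain ⟨a, rfl⟩ := hfs q
    have hm : m (f a) = s.inl a := ConcreteCategory.congr_hom h₁ a
    have hk : s.inl (hfs (f a)).choose = s.inl a := by
      obtain ⟨b, hb⟩ := hgs (f a)
      rw [cond s _ b ((hfs (f a)).choose_spec.trans hb.symm), cond s a b hb.symm]
    show m (f a) = s.inl (hfs (f a)).choose
    rw [hk, hm]
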